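/- Let F(z) = Σ_{k≥0} a_k z^k be an entire function and R > 0. Define the n-th derivative majorant |F|^{(n)}(R) = (1/n!) Σ_{k≥0} |F^{(n+k)}(0)| R^k / k!. Then for any pairwise distinct points z₁, …, z_{n+1} ∈ ℂ with |z_i| ≤ R, the divided difference satisfies |F^{(n)}(z₁, …, z_{n+1})| ≤ |F|^{(n)}(R). -/

import Mathlib

/-- Divided differences: the list holds the points in reverse order,
`divDiff F [z_{n+1}, z_n, …, z₁] = F^{(n)}(z₁, …, z_{n+1})`. -/
noncomputable def divDiff (F : ℂ → ℂ) : List ℂ → ℂ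
  | [] => 0
  | [z] => F z
  | a :: b :: l => (divDiff F (b :: l) - divDiff F (a :: l)) / (b - a)
termination_by l => l.length

/-- Divided difference `F^{(n)}(z 0, …, z n)` of a tuple. -/
noncomputable def divDiffT (F : ℂ → ℂ) (n : ℕ) (z : Fin (n + 1) → ℂ) : ℂ :=
  divDiff F (List.ofFn z).reverse

lemma divDiff_nil (F : ℂ → ℂ) : divDiff F [] = 0 := by rw [divDiff]

lemma divDiff_single (F : ℂ → ℂ) (z : ℂ) : divDiff F [z] = F z := by rw [divDiff]

lemma divDiff_cons_cons (F : ℂ → ℂ) (a b : ℂ) (l : List ℂ) :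
    divDiff F (a :: b :: l) = (divDiff F (b :: l) - divDiff F (a :: l)) / (b - a) := by
  rw [divDiff]

/-- Complete homogeneous symmetric polynomial, by a Pascal-style recursion. -/
noncomputable def hpoly : ℕ → List ℂ → ℂ
  | 0, _ => 1
  | _ + 1, [] => 0
  | r + 1, a :: l => a * hpoly r (a :: l) + hpoly (r + 1) l
termination_by r l => (r, l.length)

lemma hpoly_zero (l : List ℂ) : hpoly 0 l = 1 := by rw [hpoly]

lemma hpoly_nil (r : ℕ) : hpoly (r + 1) [] = 0 := by rw [hpoly]

lemma hpoly_cons (r : ℕ) (a : ℂ) (l : List ℂ) :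
    hpoly (r + 1) (a :: l) = a * hpoly r (a :: l) + hpoly (r + 1) l := by rw [hpoly]

lemma hpoly_singleton (r : ℕ) (z : ℂ) : hpoly r [z] = z ^ r := by
  induction r with
  | zero => rw [hpoly_zero, pow_zero]
  | succ r ih => rw [hpoly_cons, hpoly_nil, ih]; ring

lemma hpoly_sub (s : ℕ) : ∀ (a b : ℂ) (l : List ℂ),
    hpoly (s + 1) (b :: l) - hpoly (s + 1) (a :: l) = (b - a) * hpoly s (a :: b :: l) := by
  induction s with
  | zero =>
    intro a b l
    rw [hpoly_cons, hpoly_cons, hpoly_zero, hpoly_zero, hpoly_zero]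
    ring
  | succ s ih =>
    intro a b l
    rw [hpoly_cons (s + 1) b l, hpoly_cons (s + 1) a l, hpoly_cons s a (b :: l)]
    linear_combination a * ih a b l

lemma divDiff_const_mul (c : ℂ) (g : ℂ → ℂ) :
    ∀ l : List ℂ, divDiff (fun z => c * g z) l = c * divDiff g l
  | [] => by rw [divDiff_nil, divDiff_nil, mul_zero]
  | [z] => by rw [divDiff_single, divDiff_single]
  | a :: b :: l => by
    rw [divDiff_cons_cons, divDiff_cons_cons, divDiff_const_mul c g (b :: l),
      divDiff_const_mul c g (a :: l)]
    ring
termination_by l => l.length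

lemma hasSum_divDiff (f : ℕ → ℂ → ℂ) (F : ℂ → ℂ) :
    ∀ l : List ℂ, l ≠ [] → (∀ z ∈ l, HasSum (fun k => f k z) (F z)) →
      HasSum (fun k => divDiff (f k) l) (divDiff F l)
  | [], h, _ => absurd rfl h
  | [z], _, h => by
    simpa only [divDiff_single] using h z (by simp)
  | a :: b :: l, _, h => by
    have h1 := hasSum_divDiff f F (b :: l) (by simp)
      (fun w hw => h w (List.mem_cons_of_mem a hw))
    have h2 := hasSum_divDiff f F (a :: l) (by simp)
      (fun w hw => h w (by rcases List.mem_cons.mp hw with hw | hw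
                           · exact hw ▸ List.mem_cons_self
                           · exact List.mem_cons_of_mem a (List.mem_cons_of_mem b hw)))
    simpa only [divDiff_cons_cons] using (h1.sub h2).div_const (b - a)
termination_by l => l.length

lemma divDiff_pow (k : ℕ) :
    ∀ l : List ℂ, l ≠ [] → l.Pairwise (· ≠ ·) →
      divDiff (fun z => z ^ k) l
        = if l.length ≤ k + 1 then hpoly (k + 1 - l.length) l else 0
  | [], h, _ => absurd rfl h
  | [z], _, _ => by
    rw [divDiff_single]
    simp [hpoly_singleton]
  | a :: b :: l, _, hpw => by
    obtain ⟨hab, hpw'⟩ := List.pairwise_cons.mp hpw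
    have hba : b - a ≠ 0 := sub_ne_zero.mpr (Ne.symm (hab b List.mem_cons_self))
    have hpa : (a :: l).Pairwise (· ≠ ·) :=
      List.pairwise_cons.mpr ⟨fun x hx => hab x (List.mem_cons_of_mem b hx),
        (List.pairwise_cons.mp hpw').2⟩
    rw [divDiff_cons_cons, divDiff_pow k (b :: l) (by simp) hpw',
      divDiff_pow k (a :: l) (by simp) hpa]
    simp only [List.length_cons]
    by_cases h1 : l.length + 1 ≤ k + 1
    · rw [if_pos h1, if_pos h1]
      by_cases h2 : l.length + 1 + 1 ≤ k + 1
      · rw [if_pos h2]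
        obtain ⟨s, hs⟩ : ∃ s, k + 1 - (l.length + 1) = s + 1 := ⟨k - l.length - 1, by omega⟩
        rw [hs, hpoly_sub, show k + 1 - (l.length + 1 + 1) = s from by omega,
          mul_div_assoc, ← mul_div_assoc, mul_comm, mul_div_assoc, div_self hba, mul_one]
      · rw [if_neg h2, show k + 1 - (l.length + 1) = 0 from by omega, hpoly_zero, hpoly_zero]
        simp
    · rw [if_neg h1, if_neg h1, if_neg (by omega)]
      simp
termination_by l => l.length

lemma hpoly_norm_le (R : ℝ) (hR : 0 ≤ R) :
    ∀ (r : ℕ) (l : List ℂ), (∀ x ∈ l, ‖x‖ ≤ R) →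
      ‖hpoly r l‖ ≤ ((r + l.length - 1).choose r : ℝ) * R ^ r
  | 0, l, _ => by simp [hpoly_zero]
  | r + 1, [], _ => by
    rw [hpoly_nil]
    simp [Nat.choose_eq_zero_of_lt (Nat.lt_succ_self r)]
  | r + 1, a :: l, hl => by
    rw [hpoly_cons]
    have ha : ‖a‖ ≤ R := hl a List.mem_cons_self
    have h1 := hpoly_norm_le R hR r (a :: l) hl
    have h2 := hpoly_norm_le R hR (r + 1) l (fun x hx => hl x (List.mem_cons_of_mem a hx))
    calc ‖a * hpoly r (a :: l) + hpoly (r + 1) l‖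
        ≤ ‖a‖ * ‖hpoly r (a :: l)‖ + ‖hpoly (r + 1) l‖ := by
          rw [← norm_mul]; exact norm_add_le _ _
      _ ≤ R * (((r + (a :: l).length - 1).choose r : ℝ) * R ^ r)
            + ((r + 1 + l.length - 1).choose (r + 1) : ℝ) * R ^ (r + 1) := by
          gcongr
      _ = ((r + 1 + (a :: l).length - 1).choose (r + 1) : ℝ) * R ^ (r + 1) := by
          simp only [List.length_cons]
          rw [show r + (l.length + 1) - 1 = r + l.length from by omega,
            show r + 1 + l.length - 1 = r + l.length from by omega,
            show r + 1 + (l.length + 1) - 1 = r + l.length + 1 from by omega,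
            Nat.choose_succ_succ']
          push_cast
          ring
termination_by r l => (r, l.length)

lemma choose_le_two_pow'' (m j : ℕ) : m.choose j ≤ 2 ^ m := by
  rcases le_or_gt j m with h | h
  · calc m.choose j ≤ ∑ i ∈ Finset.range (m + 1), m.choose i :=
        Finset.single_le_sum (fun i _ => Nat.zero_le _) (Finset.mem_range.mpr (by omega))
      _ = 2 ^ m := Nat.sum_range_choose m
  · rw [Nat.choose_eq_zero_of_lt h]; exact Nat.zero_le _

set_option maxHeartbeats 1000000 in
/-- The derivative majorant `|F|^{(n)}(R)` dominates the divided differences of an entire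
function at points in the closed disk of radius `R`. -/
theorem stmt13 (F : ℂ → ℂ) (hF : Differentiable ℂ F) (R : ℝ) (hR : 0 < R)
    (n : ℕ) (z : Fin (n + 1) → ℂ) (hz : Function.Injective z) (hzR : ∀ i, ‖z i‖ ≤ R) :
    ‖divDiffT F n z‖
      ≤ (1 / (n.factorial : ℝ))
          * ∑' k : ℕ, ‖iteratedDeriv (n + k) F 0‖ * R ^ k / (k.factorial : ℝ) := by
  classical
  set l : List ℂ := (List.ofFn z).reverse with hldef
  have hlen : l.length = n + 1 := by simp [hldef]
  have hne : l ≠ [] := by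
    intro h; rw [h] at hlen; simp at hlen
  have hpw : l.Pairwise (· ≠ ·) := List.nodup_reverse.mpr (List.nodup_ofFn.mpr hz)
  have hmem : ∀ x ∈ l, ‖x‖ ≤ R := by
    intro x hx
    rw [hldef, List.mem_reverse, List.mem_ofFn] at hx
    obtain ⟨i, rfl⟩ := hx
    exact hzR i
  set c : ℕ → ℂ := fun k => ((k.factorial : ℂ))⁻¹ * iteratedDeriv k F 0 with hcdef
  have hT : ∀ w : ℂ, HasSum (fun k => c k * w ^ k) (F w) := by
    intro w
    have h0 := Complex.hasSum_taylorSeries_of_entire hF 0 w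
    simp only [sub_zero, smul_eq_mul] at h0
    have e : (fun k : ℕ => c k * w ^ k)
        = (fun k : ℕ => (k.factorial : ℂ)⁻¹ * (w ^ k * iteratedDeriv k F 0)) := by
      funext k; rw [hcdef]; ring
    rw [e]; exact h0
  -- D k = divided difference of z ↦ z^k
  set D : ℕ → ℂ := fun k => divDiff (fun w => w ^ k) l with hDdef
  have hDD : HasSum (fun k => c k * D k) (divDiff F l) := by
    have h0 := hasSum_divDiff (fun k w => c k * w ^ k) F l hne (fun w _ => hT w)
    have e : (fun k : ℕ => divDiff (fun w => c k * w ^ k) l) = fun k => c k * D k := by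
      funext k; exact divDiff_const_mul (c k) (fun w => w ^ k) l
    rwa [e] at h0
  have hDpow : ∀ k, D k = if n + 1 ≤ k + 1 then hpoly (k - n) l else 0 := by
    intro k
    simp only [hDdef]
    rw [divDiff_pow k l hne hpw, hlen]
    by_cases h : n + 1 ≤ k + 1
    · rw [if_pos h, if_pos h, show k + 1 - (n + 1) = k - n from by omega]
    · rw [if_neg h, if_neg h]
  have hDzero : ∀ k, k < n → D k = 0 := by
    intro k hk; rw [hDpow k, if_neg (by omega)]
  have hDshift : ∀ j : ℕ, D (j + n) = hpoly j l := by
    intro j; rw [hDpow (j + n), if_pos (by omega), show j + n - n = j from by omega]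
  have hhn : ∀ j : ℕ, ‖hpoly j l‖ ≤ ((j + n).choose j : ℝ) * R ^ j := by
    intro j
    have := hpoly_norm_le R hR.le j l hmem
    rwa [hlen, show j + (n + 1) - 1 = j + n from by omega] at this
  -- bound on the coefficients
  have h3R : (0 : ℝ) < 3 * R := by linarith
  have hsum3 := (hT ((3 * R : ℝ) : ℂ)).summable
  have htend : Filter.Tendsto (fun k => ‖c k * ((3 * R : ℝ) : ℂ) ^ k‖)
      Filter.atTop (nhds 0) := by
    simpa using hsum3.tendsto_atTop_zero.norm
  obtain ⟨M, hM⟩ := htend.bddAbove_range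
  rw [mem_upperBounds] at hM
  have hMk : ∀ k, ‖c k‖ * (3 * R) ^ k ≤ M := by
    intro k
    have := hM _ (Set.mem_range_self k)
    rwa [norm_mul, norm_pow, Complex.norm_real, Real.norm_eq_abs, abs_of_pos h3R] at this
  have hM0 : 0 ≤ M := le_trans (by positivity) (hMk 0)
  have hck : ∀ k, ‖c k‖ ≤ M / (3 * R) ^ k := by
    intro k
    rw [le_div_iff₀ (by positivity)]
    exact hMk k
  -- uniform geometric bound for the terms
  have hgeo : Summable (fun k : ℕ => (M / R ^ n) * (2 / 3 : ℝ) ^ k) :=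
    (summable_geometric_of_lt_one (by norm_num) (by norm_num)).mul_left _
  have hterm : ∀ k : ℕ, ‖c k * D k‖ ≤ (M / R ^ n) * (2 / 3 : ℝ) ^ k := by
    intro k
    rcases lt_or_ge k n with hk | hk
    · rw [hDzero k hk, mul_zero, norm_zero]
      positivity
    · have hD : ‖D k‖ ≤ (2 : ℝ) ^ k * R ^ (k - n) := by
        have h1 : D k = hpoly (k - n) l := by
          have h0 := hDshift (k - n)
          rwa [show k - n + n = k from by omega] at h0
        rw [h1]
        refine (hhn (k - n)).trans ?_
        have h2 : ((k - n + n).choose (k - n) : ℝ) ≤ (2 : ℝ) ^ k := by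
          rw [show k - n + n = k from by omega]
          exact_mod_cast (choose_le_two_pow'' k (k - n)).trans_eq (by norm_num)
        gcongr
      rw [norm_mul]
      calc ‖c k‖ * ‖D k‖ ≤ (M / (3 * R) ^ k) * ((2 : ℝ) ^ k * R ^ (k - n)) := by
            gcongr; exact hck k
        _ = (M / R ^ n) * (2 / 3 : ℝ) ^ k := by
            have hRsplit : R ^ k = R ^ (k - n) * R ^ n := by
              rw [← pow_add, show k - n + n = k from by omega]
            rw [mul_pow, hRsplit, div_pow]
            have hRn : (R : ℝ) ^ n ≠ 0 := by positivity
            have hR3 : (3 : ℝ) ^ k ≠ 0 := by positivity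
            have hRk : (R : ℝ) ^ (k - n) ≠ 0 := by positivity
            field_simp
  have hsummable : Summable (fun k : ℕ => ‖c k * D k‖) :=
    Summable.of_nonneg_of_le (fun k => norm_nonneg _) hterm hgeo
  -- the comparison series B
  set B : ℕ → ℝ := fun j => ‖c (j + n)‖ * ((j + n).choose j : ℝ) * R ^ j with hBdef
  have hBbound : ∀ j : ℕ, B j ≤ (M / R ^ n) * (2 / 3 : ℝ) ^ j := by
    intro j
    simp only [hBdef]
    calc ‖c (j + n)‖ * ((j + n).choose j : ℝ) * R ^ j
        ≤ (M / (3 * R) ^ (j + n)) * ((2 : ℝ) ^ (j + n)) * R ^ j := by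
          gcongr
          · exact hck (j + n)
          · exact_mod_cast (choose_le_two_pow'' (j + n) j).trans_eq (by norm_num)
      _ = (M / R ^ n) * ((2 / 3 : ℝ) ^ (j + n)) := by
          rw [mul_pow, pow_add R j n, div_pow]
          have hj : (R : ℝ) ^ j ≠ 0 := by positivity
          have hn' : (R : ℝ) ^ n ≠ 0 := by positivity
          have h3 : (3 : ℝ) ^ (j + n) ≠ 0 := by positivity
          field_simp
      _ ≤ (M / R ^ n) * (2 / 3 : ℝ) ^ j := by
          have h23 : ((2 : ℝ) / 3) ^ (j + n) ≤ (2 / 3 : ℝ) ^ j :=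
            pow_le_pow_of_le_one (by norm_num) (by norm_num) (Nat.le_add_right j n)
          have : (0 : ℝ) ≤ M / R ^ n := by positivity
          exact mul_le_mul_of_nonneg_left h23 this
  have hBnonneg : ∀ j, 0 ≤ B j := by
    intro j; simp only [hBdef]; positivity
  have hBsummable : Summable B :=
    Summable.of_nonneg_of_le hBnonneg hBbound hgeo
  -- now the chain of inequalities
  have key : ‖divDiff F l‖ ≤ ∑' j : ℕ, B j := by
    rw [← hDD.tsum_eq]
    refine (norm_tsum_le_tsum_norm hsummable).trans ?_
    rw [← hsummable.sum_add_tsum_nat_add n]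
    have hzero : (∑ k ∈ Finset.range n, ‖c k * D k‖) = 0 := by
      refine Finset.sum_eq_zero fun k hk => ?_
      rw [hDzero k (Finset.mem_range.mp hk), mul_zero, norm_zero]
    rw [hzero, zero_add]
    refine Summable.tsum_le_tsum ?_ ((summable_nat_add_iff n).mpr hsummable) hBsummable
    intro j
    rw [norm_mul, hDshift j]
    simp only [hBdef]
    rw [mul_assoc]
    gcongr
    exact hhn j
  -- identify the right-hand side with ∑' B
  have hRHS : (1 / (n.factorial : ℝ))
      * ∑' k : ℕ, ‖iteratedDeriv (n + k) F 0‖ * R ^ k / (k.factorial : ℝ)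
      = ∑' j : ℕ, B j := by
    rw [← tsum_mul_left]
    refine tsum_congr fun j => ?_
    simp only [hBdef, hcdef]
    rw [norm_mul, norm_inv, Complex.norm_natCast]
    have hfact : ((j + n).choose j) * j.factorial * n.factorial = (j + n).factorial := by
      have := Nat.choose_mul_factorial_mul_factorial (show j ≤ j + n from Nat.le_add_right j n)
      rwa [show j + n - j = n from by omega] at this
    rw [show n + j = j + n from by omega]
    have h1 : (0 : ℝ) < (j + n).factorial := by exact_mod_cast Nat.factorial_pos _
    have h2 : (0 : ℝ) < j.factorial := by exact_mod_cast Nat.factorial_pos _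
    have h3 : (0 : ℝ) < n.factorial := by exact_mod_cast Nat.factorial_pos _
    have hfact' : (((j + n).choose j : ℝ)) * (j.factorial : ℝ) * (n.factorial : ℝ)
        = ((j + n).factorial : ℝ) := by exact_mod_cast hfact
    rw [show ((j + n).choose j : ℝ)
        = ((j + n).factorial : ℝ) / ((j.factorial : ℝ) * (n.factorial : ℝ)) from by
      rw [eq_div_iff (by positivity)]
      linarith [hfact']]
    field_simp
    try exact Or.inl trivial
  rw [divDiffT]
  rw [hRHS]
  exact key
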